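/- Let (g, ·) be a commutative associative algebra over a field K and define, for triples x = (x₁,x₂,x₃), y = (y₁,y₂,y₃), z = (z₁,z₂,z₃) ∈ g³, the determinant-type expression |x y z| = Σ_{σ∈S₃} sgn(σ) x_{σ(1)} · y_{σ(2)} · z_{σ(3)}. If N : g → g is a Nijenhuis operator on (g, ·) and N(x) denotes componentwise application of N, then |N(x) N(y) N(z)| = N( |N(x) N(y) z| + |N(y) N(z) x| + |N(z) N(x) y| ) − N²( |N(x) y z| + |N(y) z x| + |N(z) x y| ) + N³( |x y z| ) for all x, y, z ∈ g³. -/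
import Mathlib


/-- The determinant-type expression `|x y z| = ∑_{σ ∈ S₃} sgn(σ) x_{σ(1)} y_{σ(2)} z_{σ(3)}`
for column triples `x, y, z ∈ A³`, expanded using the multiplication of `A`. -/
def detLike {A : Type*} [NonUnitalCommRing A] (x y z : Fin 3 → A) : A :=
  ∑ σ : Equiv.Perm (Fin 3), (Equiv.Perm.sign σ : ℤ) • (x (σ 0) * (y (σ 1) * z (σ 2)))

lemma detLike_expand {A : Type*} [NonUnitalCommRing A] (x y z : Fin 3 → A) :
    detLike x y z = x 0 * (y 1 * z 2) - x 1 * (y 0 * z 2) - x 2 * (y 1 * z 0)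
      - x 0 * (y 2 * z 1) + x 1 * (y 2 * z 0) + x 2 * (y 0 * z 1) := by
  rw [detLike, show (Finset.univ : Finset (Equiv.Perm (Fin 3))) =
    {1, Equiv.swap 0 1, Equiv.swap 0 2, Equiv.swap 1 2, finRotate 3, (finRotate 3)⁻¹} from by decide]
  rw [Finset.sum_insert (by decide), Finset.sum_insert (by decide), Finset.sum_insert (by decide),
    Finset.sum_insert (by decide), Finset.sum_insert (by decide), Finset.sum_singleton]
  have h1 : ∀ σ : Equiv.Perm (Fin 3), ∀ a b c : Fin 3, σ 0 = a → σ 1 = b → σ 2 = c →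
      Equiv.Perm.sign σ = 1 → ((Equiv.Perm.sign σ : ℤ) • (x (σ 0) * (y (σ 1) * z (σ 2))) : A)
        = x a * (y b * z c) := by intro σ a b c ha hb hc hs; rw [ha, hb, hc, hs]; simp
  have h2 : ∀ σ : Equiv.Perm (Fin 3), ∀ a b c : Fin 3, σ 0 = a → σ 1 = b → σ 2 = c →
      Equiv.Perm.sign σ = -1 → ((Equiv.Perm.sign σ : ℤ) • (x (σ 0) * (y (σ 1) * z (σ 2))) : A)
        = -(x a * (y b * z c)) := by intro σ a b c ha hb hc hs; rw [ha, hb, hc, hs]; simp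
  rw [h1 1 0 1 2 (by decide) (by decide) (by decide) (by decide),
    h2 (Equiv.swap 0 1) 1 0 2 (by decide) (by decide) (by decide) (by decide),
    h2 (Equiv.swap 0 2) 2 1 0 (by decide) (by decide) (by decide) (by decide),
    h2 (Equiv.swap 1 2) 0 2 1 (by decide) (by decide) (by decide) (by decide),
    h1 (finRotate 3) 1 2 0 (by decide) (by decide) (by decide) (by decide),
    h1 (finRotate 3)⁻¹ 2 0 1 (by decide) (by decide) (by decide) (by decide)]
  abel

lemma nijenhuis_triple {K : Type*} [Field K] {A : Type*} [NonUnitalCommRing A] [Module K A]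
    [SMulCommClass K A A] [IsScalarTower K A A]
    (N : A →ₗ[K] A)
    (hN : ∀ x y : A, N x * N y = N (N x * y + x * N y - N (x * y)))
    (a b c : A) :
    N a * (N b * N c)
      = N (N a * (N b * c) + N b * (N c * a) + N c * (N a * b))
        - N (N (N a * (b * c) + N b * (c * a) + N c * (a * b)))
        + N (N (N (a * (b * c)))) := by
  have step := hN (N a * b + a * N b - N (a * b)) c
  rw [← hN a b] at step
  have habc := hN (a * b) c
  rw [← mul_assoc, step, ← map_sub, ← map_add]
  congr 1
  rw [sub_mul, add_mul]
  rw [habc]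
  simp only [mul_sub, sub_mul, mul_add, add_mul, map_add, map_sub, mul_comm, mul_assoc,
    mul_left_comm]
  abel

/-- If `N` is a Nijenhuis operator on a commutative associative
algebra `(A, *)` over `K`, and `N` acts componentwise on triples, then
`|N(x) N(y) N(z)| = N(|N(x) N(y) z| + |N(y) N(z) x| + |N(z) N(x) y|)
  − N²(|N(x) y z| + |N(y) z x| + |N(z) x y|) + N³(|x y z|)`. -/
theorem nijenhuis_detLike_identity
    {K : Type*} [Field K] {A : Type*} [NonUnitalCommRing A] [Module K A]
    [SMulCommClass K A A] [IsScalarTower K A A]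
    (N : A →ₗ[K] A)
    (hN : ∀ x y : A, N x * N y = N (N x * y + x * N y - N (x * y)))
    (x y z : Fin 3 → A) :
    detLike (fun i => N (x i)) (fun i => N (y i)) (fun i => N (z i))
      = N (detLike (fun i => N (x i)) (fun i => N (y i)) z
            + detLike (fun i => N (y i)) (fun i => N (z i)) x
            + detLike (fun i => N (z i)) (fun i => N (x i)) y)
        - N (N (detLike (fun i => N (x i)) y z
            + detLike (fun i => N (y i)) z x
            + detLike (fun i => N (z i)) x y))
        + N (N (N (detLike x y z))) := by
  simp only [detLike_expand]
  rw [nijenhuis_triple N hN (x 0) (y 1) (z 2), nijenhuis_triple N hN (x 1) (y 0) (z 2),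
    nijenhuis_triple N hN (x 2) (y 1) (z 0), nijenhuis_triple N hN (x 0) (y 2) (z 1),
    nijenhuis_triple N hN (x 1) (y 2) (z 0), nijenhuis_triple N hN (x 2) (y 0) (z 1)]
  simp only [map_add, map_sub, mul_comm, mul_assoc, mul_left_comm]
  abel
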